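/- For positive integers m ≤ n: ∑_{i=1}^m (n−i)!/((m−i)!·i) = (n!/m!)·(H_n − H_{n−m}), where H_k = ∑_{j=1}^k 1/j. -/

import Mathlib

open Finset

noncomputable def H (n : ℕ) : ℝ := ∑ k ∈ Finset.range n, 1 / ((k : ℝ) + 1)
noncomputable def H2 (n : ℕ) : ℝ := ∑ k ∈ Finset.range n, 1 / ((k : ℝ) + 1) ^ 2

lemma H_succ (n : ℕ) : H (n + 1) = H n + 1 / ((n : ℝ) + 1) := by
  simp [H, Finset.sum_range_succ]

lemma aux : ∀ n m : ℕ, m ≤ n →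
    ∑ i ∈ Finset.Icc 1 m, ((Nat.factorial (n - i)) : ℝ) / (((Nat.factorial (m - i)) : ℝ) * (i : ℝ))
      = (((Nat.factorial n) : ℝ) / ((Nat.factorial m) : ℝ)) * (H n - H (n - m)) := by
  intro n
  induction n with
  | zero =>
    intro m hm
    interval_cases m
    simp
  | succ n ih =>
    intro m hm
    rcases Nat.lt_or_ge m (n + 1) with hlt | hge
    · -- m ≤ n
      have hmn : m ≤ n := Nat.lt_succ_iff.mp hlt
      rcases Nat.eq_zero_or_pos m with rfl | hmpos
      · simp
      · obtain ⟨k, rfl⟩ : ∃ k, m = k + 1 := ⟨m - 1, (Nat.succ_pred_eq_of_pos hmpos).symm⟩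
        have hkn : k + 1 ≤ n := hmn
        have hk : k ≤ n := le_trans (Nat.le_succ k) hkn
        -- key pointwise identity on Icc 1 k
        have key : ∀ i ∈ Finset.Icc 1 k,
            ((Nat.factorial (n + 1 - i)) : ℝ) / (((Nat.factorial (k + 1 - i)) : ℝ) * (i : ℝ))
            = ((n : ℝ) - k) * (((Nat.factorial (n - i)) : ℝ) / (((Nat.factorial (k + 1 - i)) : ℝ) * (i : ℝ)))
              + ((Nat.factorial (n - i)) : ℝ) / (((Nat.factorial (k - i)) : ℝ) * (i : ℝ)) := by
          intro i hi
          simp only [Finset.mem_Icc] at hi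
          obtain ⟨hi1, hik⟩ := hi
          have hin : i ≤ n := le_trans hik hk
          have h1 : n + 1 - i = (n - i) + 1 := by omega
          have h2 : k + 1 - i = (k - i) + 1 := by omega
          rw [h1, h2, Nat.factorial_succ, Nat.factorial_succ]
          have hz1 : ((Nat.factorial (k - i)) : ℝ) ≠ 0 := Nat.cast_ne_zero.mpr (Nat.factorial_ne_zero _)
          have hz2 : ((k : ℝ) - i + 1) ≠ 0 := by
            have : (i : ℝ) ≤ k := by exact_mod_cast hik
            linarith
          have hz3 : (i : ℝ) ≠ 0 := by positivity
          push_cast [Nat.cast_sub hik, Nat.cast_sub hin]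
          field_simp
          ring
        have hsplit : ∀ (f : ℕ → ℝ), ∑ i ∈ Finset.Icc 1 (k + 1), f i
            = ∑ i ∈ Finset.Icc 1 k, f i + f (k + 1) := by
          intro f
          exact Finset.sum_Icc_succ_top (Nat.succ_le_succ (Nat.zero_le k)) f
        rw [hsplit, Finset.sum_congr rfl key, Finset.sum_add_distrib, ← Finset.mul_sum]
        -- rebuild the two smaller sums
        have e1 : ∑ i ∈ Finset.Icc 1 k,
              ((Nat.factorial (n - i)) : ℝ) / (((Nat.factorial (k + 1 - i)) : ℝ) * (i : ℝ))
            = (((Nat.factorial n) : ℝ) / ((Nat.factorial (k + 1)) : ℝ)) * (H n - H (n - (k + 1)))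
              - ((Nat.factorial (n - (k + 1))) : ℝ) / (((Nat.factorial 0) : ℝ) * ((k : ℝ) + 1)) := by
          have := ih (k + 1) hkn
          rw [hsplit] at this
          have hx : ((k + 1 : ℕ) : ℝ) = (k : ℝ) + 1 := by push_cast; ring
          rw [Nat.sub_self] at this
          rw [hx] at this
          linarith [this]
        have e2 := ih k hk
        rw [e1, e2]
        -- top term
        have htop1 : n + 1 - (k + 1) = n - k := by omega
        have htop2 : k + 1 - (k + 1) = 0 := by omega
        rw [htop1, htop2]
        -- factorial relations
        have hnk1 : 1 ≤ n - k := by omega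
        have hfact : ((Nat.factorial (n - k)) : ℝ) = ((n : ℝ) - k) * ((Nat.factorial (n - (k + 1))) : ℝ) := by
          have h : n - k = (n - (k + 1)) + 1 := by omega
          rw [h, Nat.factorial_succ]
          have : ((n - (k + 1) : ℕ) : ℝ) = (n : ℝ) - k - 1 := by
            rw [Nat.cast_sub hkn]; push_cast; ring
          push_cast
          rw [this]; ring
        -- H relations
        have hH1 : H (n + 1) = H n + 1 / ((n : ℝ) + 1) := H_succ n
        have hH2 : H (n - k) = H (n - (k + 1)) + 1 / ((n : ℝ) - k) := by
          have h : n - k = (n - (k + 1)) + 1 := by omega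
          rw [h, H_succ]
          have : ((n - (k + 1) : ℕ) : ℝ) = (n : ℝ) - k - 1 := by
            rw [Nat.cast_sub hkn]; push_cast; ring
          rw [this]; ring_nf
        rw [hfact, hH1, hH2, Nat.factorial_succ, Nat.factorial_succ]
        have hz1 : ((Nat.factorial k) : ℝ) ≠ 0 := Nat.cast_ne_zero.mpr (Nat.factorial_ne_zero _)
        have hz2 : ((k : ℝ) + 1) ≠ 0 := by positivity
        have hz3 : ((n : ℝ) + 1) ≠ 0 := by positivity
        have hz4 : ((n : ℝ) - k) ≠ 0 := by
          have : (k : ℝ) + 1 ≤ n := by exact_mod_cast hkn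
          linarith
        push_cast
        field_simp
        ring
    · -- m = n + 1
      have hmeq : m = n + 1 := le_antisymm hm hge
      subst hmeq
      rw [Nat.sub_self]
      have hH0 : H 0 = 0 := by simp [H]
      rw [hH0]
      have hterm : ∀ i ∈ Finset.Icc 1 (n + 1),
          ((Nat.factorial (n + 1 - i)) : ℝ) / (((Nat.factorial (n + 1 - i)) : ℝ) * (i : ℝ))
            = 1 / (i : ℝ) := by
        intro i hi
        have hz : ((Nat.factorial (n + 1 - i)) : ℝ) ≠ 0 := Nat.cast_ne_zero.mpr (Nat.factorial_ne_zero _)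
        rw [div_mul_eq_div_div, div_self hz]
      rw [Finset.sum_congr rfl hterm]
      have hz : ((Nat.factorial (n + 1)) : ℝ) ≠ 0 := Nat.cast_ne_zero.mpr (Nat.factorial_ne_zero _)
      rw [div_self hz, one_mul, sub_zero]
      clear hterm hz hH0 ih hm hge
      induction n with
      | zero =>
        rw [Finset.Icc_self, Finset.sum_singleton]
        norm_num [H]
      | succ n ihn =>
        rw [Finset.sum_Icc_succ_top (Nat.succ_le_succ (Nat.zero_le _)), ihn, H_succ (n + 1)]
        push_cast
        ring

theorem stmt8 (m n : ℕ) (hm : 0 < m) (hmn : m ≤ n) :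
    ∑ i ∈ Finset.Icc 1 m, ((Nat.factorial (n - i)) : ℝ) / (((Nat.factorial (m - i)) : ℝ) * (i : ℝ))
      = (((Nat.factorial n) : ℝ) / ((Nat.factorial m) : ℝ)) * (H n - H (n - m)) := by
  exact aux n m hmn
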